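/- Let Ω ⊆ ℝ² be an open bounded set and f : Ω → ℝ measurable. Suppose there exist constants C > 0, δ > 1, and an integer m ≥ 0 such that for all λ ≥ 2, |∫_Ω e^{iλ f(x)} dx| ≤ C λ^{-δ} (log λ)^m. Then there is a constant C' > 0 such that for all sufficiently small ε > 0, the Lebesgue measure of {x ∈ Ω : |f(x)| ≤ ε} is at most C' ε. -/

import Mathlib

open MeasureTheory Real Set

lemma aux_tail (C δ : ℝ) (m : ℕ) (hC : 0 < C) (hδ : 1 < δ) :
    ∃ K > 0, ∀ s : ℝ, 2 ≤ s → C * s ^ (-δ) * Real.log s ^ m ≤ K * s ^ (-((1 + δ) / 2)) := by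
  set η : ℝ := (δ - 1) / (2 * (m + 1)) with hηdef
  have hη : 0 < η := by apply div_pos (by linarith); positivity
  refine ⟨C / η ^ m, by positivity, fun s hs => ?_⟩
  have hs0 : (0:ℝ) < s := by linarith
  have hs1 : (1:ℝ) ≤ s := by linarith
  have hlog : Real.log s ≤ s ^ η / η := Real.log_le_rpow_div hs0.le hη
  have hlog0 : 0 ≤ Real.log s := Real.log_nonneg hs1
  have h1 : Real.log s ^ m ≤ (s ^ η / η) ^ m := pow_le_pow_left₀ hlog0 hlog m
  have h2 : (s ^ η / η) ^ m = s ^ (η * m) / η ^ m := by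
    rw [div_pow, ← Real.rpow_natCast (s ^ η) m, ← Real.rpow_mul hs0.le]
  have h3 : s ^ (-δ) * s ^ (η * m) = s ^ (-δ + η * m) := (Real.rpow_add hs0 _ _).symm
  have h4 : s ^ (-δ + η * m) ≤ s ^ (-((1 + δ) / 2)) := by
    apply Real.rpow_le_rpow_of_exponent_le hs1
    have : η * m ≤ η * (m + 1) := by nlinarith
    have : η * (m + 1) = (δ - 1) / 2 := by
      rw [hηdef, div_mul_eq_mul_div, div_eq_div_iff (by positivity) (by norm_num)]; ring
    nlinarith
  calc C * s ^ (-δ) * Real.log s ^ m ≤ C * s ^ (-δ) * (s ^ (η * m) / η ^ m) := by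
        apply mul_le_mul_of_nonneg_left (h1.trans_eq h2); positivity
    _ = C / η ^ m * (s ^ (-δ) * s ^ (η * m)) := by ring
    _ = C / η ^ m * s ^ (-δ + η * m) := by rw [h3]
    _ ≤ C / η ^ m * s ^ (-((1 + δ) / 2)) := by
        apply mul_le_mul_of_nonneg_left h4; positivity


set_option maxHeartbeats 1000000 in
theorem stmt_1 (Ω : Set (ℝ × ℝ)) (hΩo : IsOpen Ω) (hΩb : Bornology.IsBounded Ω)
    (f : ℝ × ℝ → ℝ) (hf : Measurable f)
    (C δ : ℝ) (m : ℕ) (hC : 0 < C) (hδ : 1 < δ)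
    (hosc : ∀ L : ℝ, 2 ≤ L →
      ‖∫ x in Ω, Complex.exp (Complex.I * L * f x)‖ ≤ C * L ^ (-δ) * (Real.log L) ^ m) :
    ∃ C' > 0, ∃ ε₀ > (0:ℝ), ∀ ε ∈ Ioo (0:ℝ) ε₀,
      (volume {x ∈ Ω | |f x| ≤ ε}).toReal ≤ C' * ε := by
  obtain ⟨K, hK, hKb⟩ := aux_tail C δ m hC hδ
  have hρ : -((1 + δ) / 2) < -1 := by linarith
  have hΩm : MeasurableSet Ω := hΩo.measurableSet
  have hVfin : volume Ω < ⊤ := hΩb.measure_lt_top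
  set V : ℝ := (volume Ω).toReal with hVdef
  have hV0 : 0 ≤ V := ENNReal.toReal_nonneg
  set g : ℝ → ℂ := fun s => ∫ x in Ω, Complex.exp (Complex.I * s * f x) with hgdef
  -- basic bounds on g
  have hgV : ∀ s : ℝ, ‖g s‖ ≤ V := by
    intro s
    have := norm_setIntegral_le_of_norm_le_const (C := 1) hVfin
      (fun x _ => le_of_eq (by simp [Complex.norm_exp]))
      (f := fun x => Complex.exp (Complex.I * s * f x))
    simpa [measureReal_def] using this
  have hgsymm : ∀ s : ℝ, ‖g (-s)‖ = ‖g s‖ := by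
    intro s
    have key : g (-s) = (starRingEnd ℂ) (g s) := by
      simp only [hgdef]
      rw [← integral_conj]
      apply integral_congr_ae
      apply Filter.Eventually.of_forall
      intro x
      beta_reduce
      rw [← Complex.exp_conj]
      congr 1
      simp only [map_mul, Complex.conj_I, Complex.conj_ofReal]
      push_cast
      ring
    rw [key, RCLike.norm_conj]
  have hgtail : ∀ s : ℝ, 2 ≤ s → ‖g s‖ ≤ K * s ^ (-((1 + δ) / 2)) :=
    fun s hs => (hosc s hs).trans (hKb s hs)
  have hBint : IntegrableOn (fun s : ℝ => K * s ^ (-((1 + δ) / 2))) (Ioi 2) volume :=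
    (integrableOn_Ioi_rpow_of_lt hρ two_pos).const_mul K
  set B : ℝ := ∫ s in Ioi (2:ℝ), K * s ^ (-((1 + δ) / 2)) with hBdef
  have hB0 : 0 ≤ B := setIntegral_nonneg measurableSet_Ioi fun s hs => by
    have : (0:ℝ) < s := lt_trans two_pos hs
    positivity
  set A : ℝ := 4 * V + 2 * B with hAdef
  have hA0 : 0 ≤ A := by positivity
  refine ⟨A * Real.exp 1 / 2 + 1, by positivity, 1, one_pos, ?_⟩
  rintro ε ⟨hε0, hε1⟩
  set L : ℝ := 2 / ε with hLdef
  have hL0 : 0 < L := by positivity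
  have hL2 : 2 ≤ L := by
    rw [hLdef, le_div_iff₀ hε0]; linarith
  set bR : ℝ := (L ^ 2)⁻¹ with hbRdef
  have hbR : 0 < bR := by positivity
  set S : Set (ℝ × ℝ) := {x ∈ Ω | |f x| ≤ ε} with hSdef
  have hSsub : S ⊆ Ω := fun x hx => hx.1
  have hSm : MeasurableSet S := hΩm.inter (hf.abs measurableSet_Iic)
  have hSfin : volume S < ⊤ := lt_of_le_of_lt (measure_mono hSsub) hVfin
  set F : (ℝ × ℝ) → ℝ → ℂ :=
    fun x s => Complex.exp (Complex.I * (f x) * s) * Complex.exp (-(bR:ℂ) * s ^ 2) with hFdef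
  set h : (ℝ × ℝ) → ℝ :=
    fun x => (π * L ^ 2) ^ ((1:ℝ)/2) * Real.exp (-(f x ^ 2 * L ^ 2 / 4)) with hhdef
  -- pointwise Gaussian Fourier transform
  have hL2' : (0:ℝ) < L ^ 2 := by positivity
  have hpt : ∀ x : ℝ × ℝ, (∫ s : ℝ, F x s) = ((h x : ℝ) : ℂ) := by
    intro x
    have hb : 0 < ((bR : ℂ)).re := by simpa using hbR
    have hFT := fourierIntegral_gaussian hb ((f x : ℝ) : ℂ)
    simp only [hFdef]
    rw [hFT]
    have e1 : (π : ℂ) / (bR : ℂ) = ((π * L ^ 2 : ℝ) : ℂ) := by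
      rw [hbRdef]
      push_cast
      field_simp
    have e2 : -((f x : ℝ) : ℂ) ^ 2 / (4 * (bR : ℂ)) = ((-(f x ^ 2 * L ^ 2 / 4) : ℝ) : ℂ) := by
      rw [hbRdef]
      push_cast
      have hLne : ((L:ℂ)) ≠ 0 := by exact_mod_cast hL0.ne'
      rw [div_eq_iff (mul_ne_zero (by norm_num) (inv_ne_zero (pow_ne_zero 2 hLne)))]
      field_simp
    rw [e1, e2, ← Complex.ofReal_exp]
    have e3 : ((π * L ^ 2 : ℝ) : ℂ) ^ (1 / 2 : ℂ)
        = (((π * L ^ 2) ^ ((1:ℝ) / 2) : ℝ) : ℂ) := by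
      rw [Complex.ofReal_cpow (by positivity)]
      norm_num
    rw [e3, hhdef]
    push_cast
    ring
  -- integrability on the product
  have hnormF : ∀ (x : ℝ × ℝ) (s : ℝ), ‖F x s‖ = Real.exp (-bR * s ^ 2) := by
    intro x s
    simp only [hFdef]
    rw [norm_mul]
    have h1 : Complex.I * (f x : ℂ) * (s : ℂ) = ((f x * s : ℝ) : ℂ) * Complex.I := by
      push_cast; ring
    have h2 : -(bR : ℂ) * (s : ℂ) ^ 2 = ((-bR * s ^ 2 : ℝ) : ℂ) := by push_cast; ring
    rw [h1, h2, Complex.norm_exp_ofReal_mul_I,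
      Complex.norm_exp_ofReal, one_mul]
  have hFmeas : AEStronglyMeasurable (Function.uncurry F)
      ((volume.restrict Ω).prod volume) := by
    apply Measurable.aestronglyMeasurable
    simp only [hFdef, Function.uncurry]
    apply Measurable.mul
    · exact Complex.measurable_exp.comp
        ((measurable_const.mul
          (Complex.measurable_ofReal.comp (hf.comp measurable_fst))).mul
          (Complex.measurable_ofReal.comp measurable_snd))
    · exact Complex.measurable_exp.comp
        (measurable_const.mul
          ((Complex.measurable_ofReal.comp measurable_snd).pow measurable_const))
  have hFint : Integrable (Function.uncurry F) ((volume.restrict Ω).prod volume) := by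
    have hbd : Integrable (fun p : (ℝ × ℝ) × ℝ => Real.exp (-bR * p.2 ^ 2))
        ((volume.restrict Ω).prod volume) := by
      have h1 : Integrable (fun _ : ℝ × ℝ => (1:ℝ)) (volume.restrict Ω) :=
        integrableOn_const hVfin.ne
      have := h1.mul_prod (integrable_exp_neg_mul_sq hbR)
      simpa using this
    exact hbd.mono' hFmeas (Filter.Eventually.of_forall fun p => le_of_eq (hnormF p.1 p.2))
  -- the double integral
  set J : ℂ := ∫ x in Ω, (∫ s : ℝ, F x s) with hJdef
  have hJreal : J = ((∫ x in Ω, h x : ℝ) : ℂ) := by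
    rw [hJdef]
    simp_rw [hpt]
    exact integral_ofReal
  have hinner : ∀ s : ℝ, (∫ x in Ω, F x s) = g s * Complex.exp (-(bR:ℂ) * s ^ 2) := by
    intro s
    simp only [hFdef]
    rw [integral_mul_const]
    congr 1
    simp only [hgdef]
    apply integral_congr_ae
    apply Filter.Eventually.of_forall
    intro x
    beta_reduce
    rw [mul_right_comm]
  have hswap : J = ∫ s : ℝ, (g s * Complex.exp (-(bR:ℂ) * s ^ 2)) := by
    rw [hJdef, MeasureTheory.integral_integral_swap hFint]
    exact integral_congr_ae (Filter.Eventually.of_forall hinner)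
  -- upper bound for ‖J‖
  set J' : ℝ → ℂ := fun s => g s * Complex.exp (-(bR:ℂ) * s ^ 2) with hJ'def
  have hJ'norm : ∀ s : ℝ, ‖J' s‖ = ‖g s‖ * Real.exp (-bR * s ^ 2) := by
    intro s
    simp only [hJ'def]
    rw [norm_mul]
    congr 1
    have h2 : -(bR : ℂ) * (s : ℂ) ^ 2 = ((-bR * s ^ 2 : ℝ) : ℂ) := by push_cast; ring
    rw [h2, Complex.norm_exp_ofReal]
  have hexp1 : ∀ s : ℝ, Real.exp (-bR * s ^ 2) ≤ 1 := by
    intro s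
    rw [show (1:ℝ) = Real.exp 0 from (Real.exp_zero).symm]
    apply Real.exp_le_exp.2
    nlinarith [sq_nonneg s]
  have hJ'int : Integrable J' volume := by
    have hswapint : Integrable (Function.uncurry fun (s : ℝ) (x : ℝ × ℝ) => F x s)
        (volume.prod (volume.restrict Ω)) := hFint.swap
    have := hswapint.integral_prod_left
    exact this.congr (Filter.Eventually.of_forall fun s => (hinner s))
  have htailbound : ∀ s : ℝ, s ∈ Ioi (2:ℝ) → ‖J' s‖ ≤ K * s ^ (-((1 + δ) / 2)) := by
    intro s hs
    have hs2 : (2:ℝ) ≤ s := le_of_lt hs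
    calc ‖J' s‖ = ‖g s‖ * Real.exp (-bR * s ^ 2) := hJ'norm s
      _ ≤ ‖g s‖ * 1 := mul_le_mul_of_nonneg_left (hexp1 s) (norm_nonneg _)
      _ = ‖g s‖ := mul_one _
      _ ≤ K * s ^ (-((1 + δ) / 2)) := hgtail s hs2
  have hP3 : ‖∫ s in Ioi (2:ℝ), J' s‖ ≤ B := by
    rw [hBdef]
    apply norm_integral_le_of_norm_le hBint
    filter_upwards [ae_restrict_mem measurableSet_Ioi] with s hs
    exact htailbound s hs
  have hP1 : ‖∫ s in Iic (-2:ℝ), J' s‖ ≤ B := by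
    rw [← integral_comp_neg_Ioi 2 J', hBdef]
    apply norm_integral_le_of_norm_le hBint
    filter_upwards [ae_restrict_mem measurableSet_Ioi] with s hs
    have hs2 : (2:ℝ) ≤ s := le_of_lt hs
    calc ‖J' (-s)‖ = ‖g (-s)‖ * Real.exp (-bR * (-s) ^ 2) := hJ'norm (-s)
      _ = ‖g s‖ * Real.exp (-bR * s ^ 2) := by rw [hgsymm, neg_sq]
      _ ≤ ‖g s‖ * 1 := mul_le_mul_of_nonneg_left (hexp1 s) (norm_nonneg _)
      _ = ‖g s‖ := mul_one _
      _ ≤ K * s ^ (-((1 + δ) / 2)) := hgtail s hs2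
  have hP2 : ‖∫ s in Ioc (-2:ℝ) 2, J' s‖ ≤ 4 * V := by
    have hvol : volume (Ioc (-2:ℝ) 2) < ⊤ := by
      rw [Real.volume_Ioc]
      exact ENNReal.ofReal_lt_top
    have := norm_setIntegral_le_of_norm_le_const (C := V) hvol
      (f := J') (fun s _ => by
        calc ‖J' s‖ = ‖g s‖ * Real.exp (-bR * s ^ 2) := hJ'norm s
          _ ≤ ‖g s‖ * 1 := mul_le_mul_of_nonneg_left (hexp1 s) (norm_nonneg _)
          _ = ‖g s‖ := mul_one _
          _ ≤ V := hgV s)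
    have hvol4 : (volume (Ioc (-2:ℝ) 2)).toReal = 4 := by
      rw [Real.volume_Ioc]
      rw [ENNReal.toReal_ofReal (by norm_num)]
      norm_num
    rw [measureReal_def, hvol4] at this
    linarith
  have hupper : ‖J‖ ≤ A := by
    have hsplit : (∫ s : ℝ, J' s)
        = (∫ s in Iic (-2:ℝ), J' s) + ((∫ s in Ioc (-2:ℝ) 2, J' s) + ∫ s in Ioi (2:ℝ), J' s) := by
      rw [← intervalIntegral.integral_Iic_add_Ioi hJ'int.integrableOn hJ'int.integrableOn]
      congr 1
      rw [← setIntegral_union (Set.Ioc_disjoint_Ioi le_rfl) measurableSet_Ioi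
        hJ'int.integrableOn hJ'int.integrableOn,
        Set.Ioc_union_Ioi_eq_Ioi (by norm_num : (-2:ℝ) ≤ 2)]
    rw [hswap]
    calc ‖∫ s : ℝ, J' s‖
        ≤ ‖∫ s in Iic (-2:ℝ), J' s‖ + (‖∫ s in Ioc (-2:ℝ) 2, J' s‖ + ‖∫ s in Ioi (2:ℝ), J' s‖) := by
          rw [hsplit]
          exact (norm_add_le _ _).trans (add_le_add le_rfl (norm_add_le _ _))
      _ ≤ B + (4 * V + B) := add_le_add hP1 (add_le_add hP2 hP3)
      _ = A := by rw [hAdef]; ring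
  -- lower bound
  have hhmeas : Measurable h := by
    simp only [hhdef]
    exact measurable_const.mul
      (Real.measurable_exp.comp ((((hf.pow_const 2).mul_const (L ^ 2)).div_const 4).neg))
  have hhnonneg : ∀ x, 0 ≤ h x := by
    intro x
    simp only [hhdef]
    positivity
  have hhbdd : ∀ x, h x ≤ (π * L ^ 2) ^ ((1:ℝ)/2) := by
    intro x
    simp only [hhdef]
    have : Real.exp (-(f x ^ 2 * L ^ 2 / 4)) ≤ 1 := by
      rw [show (1:ℝ) = Real.exp 0 from (Real.exp_zero).symm]
      apply Real.exp_le_exp.2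
      nlinarith [sq_nonneg (f x), sq_nonneg L, sq_nonneg (f x * L)]
    calc (π * L ^ 2) ^ ((1:ℝ)/2) * Real.exp (-(f x ^ 2 * L ^ 2 / 4))
        ≤ (π * L ^ 2) ^ ((1:ℝ)/2) * 1 := by
          apply mul_le_mul_of_nonneg_left this (by positivity)
      _ = (π * L ^ 2) ^ ((1:ℝ)/2) := mul_one _
  have hint_h : IntegrableOn h Ω volume := by
    apply Measure.integrableOn_of_bounded hVfin.ne hhmeas.aestronglyMeasurable
      (M := (π * L ^ 2) ^ ((1:ℝ)/2))
    apply Filter.Eventually.of_forall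
    intro x
    rw [Real.norm_eq_abs, abs_of_nonneg (hhnonneg x)]
    exact hhbdd x
  have hlower : L * Real.exp (-1) * (volume S).toReal ≤ ‖J‖ := by
    have hch : ∀ x ∈ S, (π * L ^ 2) ^ ((1:ℝ)/2) * Real.exp (-1) ≤ h x := by
      intro x hx
      simp only [hhdef]
      apply mul_le_mul_of_nonneg_left _ (by positivity)
      apply Real.exp_le_exp.2
      have hfe : |f x| ≤ ε := hx.2
      have hfx2 : f x ^ 2 ≤ ε ^ 2 := by
        rw [← sq_abs]
        exact pow_le_pow_left₀ (abs_nonneg _) hfe 2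
      have hLε : L * ε = 2 := by
        rw [hLdef]
        field_simp
      nlinarith [mul_le_mul_of_nonneg_right hfx2 (sq_nonneg L), hLε, sq_nonneg (f x)]
    have h1 : (π * L ^ 2) ^ ((1:ℝ)/2) * Real.exp (-1) * (volume S).toReal
        ≤ ∫ x in S, h x :=
      setIntegral_ge_of_const_le_real hSm hSfin.ne hch (hint_h.mono_set hSsub)
    have h2 : (∫ x in S, h x) ≤ ∫ x in Ω, h x :=
      setIntegral_mono_set hint_h
        (Filter.Eventually.of_forall hhnonneg) (HasSubset.Subset.eventuallyLE hSsub)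
    have h3 : (∫ x in Ω, h x) ≤ ‖J‖ := by
      rw [hJreal, Complex.norm_real, Real.norm_eq_abs]
      exact le_abs_self _
    have hLle : L ≤ (π * L ^ 2) ^ ((1:ℝ)/2) := by
      have h4 : ((L ^ 2 : ℝ)) ^ ((1:ℝ)/2) = L := by
        rw [show ((1:ℝ)/2) = 1/(2:ℝ) from rfl, ← Real.sqrt_eq_rpow]
        exact Real.sqrt_sq hL0.le
      calc L = (L ^ 2) ^ ((1:ℝ)/2) := h4.symm
        _ ≤ (π * L ^ 2) ^ ((1:ℝ)/2) := by
            apply Real.rpow_le_rpow (by positivity) _ (by norm_num)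
            nlinarith [Real.pi_gt_three]
    calc L * Real.exp (-1) * (volume S).toReal
        ≤ (π * L ^ 2) ^ ((1:ℝ)/2) * Real.exp (-1) * (volume S).toReal := by
          apply mul_le_mul_of_nonneg_right _ ENNReal.toReal_nonneg
          exact mul_le_mul_of_nonneg_right hLle (Real.exp_nonneg _)
      _ ≤ ∫ x in S, h x := h1
      _ ≤ ∫ x in Ω, h x := h2
      _ ≤ ‖J‖ := h3
  -- conclude
  have hM0 : 0 ≤ (volume S).toReal := ENNReal.toReal_nonneg
  have key : L * Real.exp (-1) * (volume S).toReal ≤ A := hlower.trans hupper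
  have hexp : Real.exp (-1) = (Real.exp 1)⁻¹ := by rw [Real.exp_neg]
  have hL : L = 2 / ε := hLdef
  have : (volume S).toReal ≤ A * Real.exp 1 / 2 * ε := by
    rw [hexp] at key
    have he1 : (0:ℝ) < Real.exp 1 := Real.exp_pos 1
    rw [hL] at key
    have h2 : 2 / ε * (Real.exp 1)⁻¹ * (volume S).toReal
        = (volume S).toReal * 2 / (ε * Real.exp 1) := by field_simp
    rw [h2] at key
    rw [div_le_iff₀ (by positivity)] at key
    have key2 : (volume S).toReal * 2 ≤ A * Real.exp 1 / 2 * ε * 2 := by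
      refine key.trans (le_of_eq (by ring))
    linarith [key2]
  calc (volume S).toReal ≤ A * Real.exp 1 / 2 * ε := this
    _ ≤ (A * Real.exp 1 / 2 + 1) * ε := by nlinarith
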